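/- Consider stochastic gradient descent on the parameters of a ReLU network with architecture a = (a_0,...,a_D): Θ_t = Θ_{t-1} - γ_t G_t(Θ_{t-1}), where G_t agrees with the partial derivatives of the loss L_t(θ) = F_t(𝔠 ∘ N_a^θ) wherever those partial derivatives exist. If the initialization Θ_0 lies in the inactive set I_a^j (all weights and biases of hidden layer j, 1 < j < D, strictly negative), then Θ_t ∈ I_a^j for every t ≥ 0. -/

import Mathlib

open MeasureTheory ProbabilityTheory

noncomputable section

/-- `layerSum a j = ∑_{i=1}^{j} a_i (a_{i-1}+1)`, the number of parameters in layers `1,…,j`. -/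
def layerSum (a : ℕ → ℕ) (j : ℕ) : ℕ := ∑ i ∈ Finset.Icc 1 j, a i * (a (i - 1) + 1)

/-- The affine map of a layer with `m` outputs, `n` inputs, parameters read from `θ`
starting at offset `k` (weights row-wise, then biases). -/
def affApply (m n : ℕ) (θ : ℕ → ℝ) (k : ℕ) (y : Fin n → ℝ) : Fin m → ℝ :=
  fun i => (∑ l : Fin n, θ (k + i.val * n + l.val) * y l) + θ (k + m * n + i.val)

/-- Forward pass through the first `j` layers of the network, with componentwise ReLU
applied after each affine layer. -/
def fwd (a : ℕ → ℕ) (θ : ℕ → ℝ) (x : Fin (a 0) → ℝ) : (j : ℕ) → Fin (a j) → ℝ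
  | 0 => x
  | j + 1 => fun i => max (affApply (a (j + 1)) (a j) θ (layerSum a j) (fwd a θ x j) i) 0

/-- The realization `N_a^θ : ℝ^{a 0} → ℝ^{a D}` of the fully connected feedforward ReLU
network with architecture `a = (a 0, …, a D)` and parameters `θ`:
ReLU after each of the hidden layers `1,…,D-1`, linear read-out layer `D`. -/
def realization (a : ℕ → ℕ) (D : ℕ) (θ : ℕ → ℝ) (x : Fin (a 0) → ℝ) : Fin (a D) → ℝ :=
  affApply (a D) (a (D - 1)) θ (layerSum a (D - 1)) (fwd a θ x (D - 1))

/-- All weights and biases of layer `j` (the parameter block with indices in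
`[layerSum a (j-1), layerSum a j)`) are strictly negative. -/
def layerNeg (a : ℕ → ℕ) (j : ℕ) (θ : ℕ → ℝ) : Prop :=
  ∀ i, layerSum a (j - 1) ≤ i → i < layerSum a j → θ i < 0

/-- The inactive set `I_a`: some hidden layer `j` with `1 < j < D` has all its weights and
biases strictly negative. -/
def Inactive (a : ℕ → ℕ) (D : ℕ) (θ : ℕ → ℝ) : Prop :=
  ∃ j, 1 < j ∧ j < D ∧ layerNeg a j θ

end

lemma layerSum_succ (a : ℕ → ℕ) (p : ℕ) :
    layerSum a (p + 1) = layerSum a p + a (p + 1) * (a p + 1) := by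
  unfold layerSum
  rw [Finset.sum_Icc_succ_top (by omega : 1 ≤ p + 1)]
  simp

lemma layerSum_mono (a : ℕ → ℕ) {i j : ℕ} (h : i ≤ j) : layerSum a i ≤ layerSum a j := by
  unfold layerSum
  exact Finset.sum_le_sum_of_subset (Finset.Icc_subset_Icc_right h)

lemma affApply_congr (m n : ℕ) (θ θ' : ℕ → ℝ) (k : ℕ) (y y' : Fin n → ℝ)
    (hy : y = y') (hθ : ∀ k', k ≤ k' → θ k' = θ' k') :
    affApply m n θ k y = affApply m n θ' k y' := by
  subst hy
  funext i
  unfold affApply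
  congr 1
  · exact Finset.sum_congr rfl fun l _ => by rw [hθ _ (by omega)]
  · rw [hθ _ (by omega)]

lemma fwd_nonneg (a : ℕ → ℕ) (θ : ℕ → ℝ) (x : Fin (a 0) → ℝ) (p : ℕ) (i : Fin (a (p + 1))) :
    0 ≤ fwd a θ x (p + 1) i :=
  le_max_right _ _

lemma fwd_zero (a : ℕ → ℕ) (θ : ℕ → ℝ) (x : Fin (a 0) → ℝ) (q : ℕ)
    (hneg : layerNeg a (q + 2) θ) : fwd a θ x (q + 2) = fun _ => 0 := by
  funext i
  show max (affApply (a (q + 2)) (a (q + 1)) θ (layerSum a (q + 1)) (fwd a θ x (q + 1)) i) 0 = 0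
  apply max_eq_right
  apply le_of_lt
  unfold affApply
  have hls : layerSum a (q + 2) = layerSum a (q + 1) + a (q + 2) * (a (q + 1) + 1) :=
    layerSum_succ a (q + 1)
  have hneg' : ∀ r, r < a (q + 2) * (a (q + 1) + 1) → θ (layerSum a (q + 1) + r) < 0 := by
    intro r hr
    have := hneg (layerSum a (q + 1) + r) (by simp) (by omega)
    simpa using this
  apply add_neg_of_nonpos_of_neg
  · apply Finset.sum_nonpos
    intro l _
    apply mul_nonpos_of_nonpos_of_nonneg
    · apply le_of_lt
      have hi := i.isLt
      have hl := l.isLt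
      have : i.val * a (q + 1) + l.val < a (q + 2) * (a (q + 1) + 1) := by nlinarith
      have := hneg' (i.val * a (q + 1) + l.val) this
      convert this using 2
      exacts [rfl, by omega]
    · exact fwd_nonneg a θ x q l
  · have hi := i.isLt
    have : a (q + 2) * a (q + 1) + i.val < a (q + 2) * (a (q + 1) + 1) := by nlinarith
    have := hneg' (a (q + 2) * a (q + 1) + i.val) this
    convert this using 2
    exacts [rfl, by omega]

lemma fwd_from (a : ℕ → ℕ) (θ θ' : ℕ → ℝ) (x : Fin (a 0) → ℝ) (p : ℕ)
    (h0 : fwd a θ x p = fwd a θ' x p)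
    (hhi : ∀ k, layerSum a p ≤ k → θ k = θ' k) :
    ∀ m, fwd a θ x (p + m) = fwd a θ' x (p + m) := by
  intro m
  induction m with
  | zero => exact h0
  | succ m ih =>
    have : p + (m + 1) = (p + m) + 1 := by omega
    rw [this]
    funext i
    show max (affApply (a (p + m + 1)) (a (p + m)) θ (layerSum a (p + m)) (fwd a θ x (p + m)) i) 0
      = max (affApply (a (p + m + 1)) (a (p + m)) θ' (layerSum a (p + m)) (fwd a θ' x (p + m)) i) 0
    rw [affApply_congr (a (p + m + 1)) (a (p + m)) θ θ' (layerSum a (p + m)) _ _ ih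
      (fun k' hk' => hhi k' (le_trans (layerSum_mono a (by omega)) hk'))]

lemma realization_congr (a : ℕ → ℕ) (D j : ℕ) (hj1 : 1 < j) (hjD : j < D)
    (θ θ' : ℕ → ℝ) (hn : layerNeg a j θ) (hn' : layerNeg a j θ')
    (hhi : ∀ k, layerSum a j ≤ k → θ k = θ' k) (x : Fin (a 0) → ℝ) :
    realization a D θ x = realization a D θ' x := by
  obtain ⟨q, rfl⟩ : ∃ q, j = q + 2 := ⟨j - 2, by omega⟩
  have h0 : fwd a θ x (q + 2) = fwd a θ' x (q + 2) := by
    rw [fwd_zero a θ x q hn, fwd_zero a θ' x q hn']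
  have hfwd := fwd_from a θ θ' x (q + 2) h0 hhi
  obtain ⟨m, hm⟩ : ∃ m, D - 1 = (q + 2) + m := ⟨D - 1 - (q + 2), by omega⟩
  unfold realization
  apply affApply_congr
  · rw [hm]; exact hfwd m
  · intro k' hk'
    exact hhi k' (le_trans (layerSum_mono a (by omega)) hk')

/-- SGD cannot escape the inactive set: if the initialization `Θ 0` has all weights and
biases of hidden layer `j` (with `1 < j < D`) strictly negative, then so does every
gradient descent iterate `Θ t`. -/
theorem stmt7 (a : ℕ → ℕ) (D : ℕ) (hD : 3 ≤ D) (hpos : ∀ i, i ≤ D → 0 < a i)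
    (haD : a D = 1) (𝔠 : ℝ → ℝ) (h𝔠 : Continuous 𝔠)
    (F : ℕ → ((Fin (a 0) → ℝ) → ℝ) → ℝ)
    (L : ℕ → (ℕ → ℝ) → ℝ)
    (hL : ∀ t θ, L t θ = F t (fun x => 𝔠 (realization a D θ x ⟨0, by omega⟩)))
    (G : ℕ → (ℕ → ℝ) → ℕ → ℝ)
    (hG : ∀ t (θ : ℕ → ℝ) (i : ℕ),
      DifferentiableAt ℝ (fun s => L t (Function.update θ i s)) (θ i) →
      G t θ i = deriv (fun s => L t (Function.update θ i s)) (θ i))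
    (γ : ℕ → ℝ) (Θ : ℕ → ℕ → ℝ)
    (hΘ : ∀ t i, Θ (t + 1) i = Θ t i - γ (t + 1) * G (t + 1) (Θ t) i)
    (j : ℕ) (hj1 : 1 < j) (hjD : j < D) (h0 : layerNeg a j (Θ 0)) :
    ∀ t, layerNeg a j (Θ t) := by
  intro t
  induction t with
  | zero => exact h0
  | succ t ih =>
    intro i hlo hhi
    have hineg : Θ t i < 0 := ih i hlo hhi
    have hconst : ∀ s : ℝ, s < 0 →
        L (t + 1) (Function.update (Θ t) i s) = L (t + 1) (Θ t) := by
      intro s hs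
      rw [hL, hL]
      congr 1
      funext x
      congr 1
      have hupd : layerNeg a j (Function.update (Θ t) i s) := by
        intro k hk1 hk2
        by_cases hk : k = i
        · subst hk; simpa using hs
        · rw [Function.update_of_ne hk]; exact ih k hk1 hk2
      have hagree : ∀ k, layerSum a j ≤ k → Function.update (Θ t) i s k = Θ t k := by
        intro k hk
        have : k ≠ i := by omega
        rw [Function.update_of_ne this]
      rw [realization_congr a D j hj1 hjD _ _ hupd ih hagree x]
    have hev : (fun s => L (t + 1) (Function.update (Θ t) i s))
        =ᶠ[nhds (Θ t i)] fun _ => L (t + 1) (Θ t) :=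
      Filter.eventuallyEq_of_mem (Iio_mem_nhds hineg) (fun s hs => hconst s hs)
    have hdiff : DifferentiableAt ℝ (fun s => L (t + 1) (Function.update (Θ t) i s)) (Θ t i) :=
      (differentiableAt_const _).congr_of_eventuallyEq hev
    have hderiv : deriv (fun s => L (t + 1) (Function.update (Θ t) i s)) (Θ t i) = 0 := by
      rw [hev.deriv_eq, deriv_const]
    have hGi : G (t + 1) (Θ t) i = 0 := by
      rw [hG (t + 1) (Θ t) i hdiff, hderiv]
    rw [hΘ t i, hGi, mul_zero, sub_zero]
    exact hineg
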